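/- arXiv:2104.13286 — 5 statements merged into one kernel-verified Lean document; each statement's English description precedes it below -/
import Mathlib

section
/- Let E/F be a finite extension of p-adic fields with ramification index e, uniformizers ϖ_E and ϖ_F, and suppose E/F is Galois with cyclic Galois group generated by θ. For a positive integer m write m = ke + r with k ≥ 0 and 0 ≤ r < e, and let K_E(m) = I_n + ϖ_E^m M_n(O_E) and K_F(m) = I_n + ϖ_F^m M_n(O_F). Then the θ-fixed part of K_E(m) equals K_F(k+1) if r ≠ 0 and equals K_F(k) if r = 0. -/
/-- For a cyclic extension `E/F` of `p`-adic fields with ramification index `e`,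
the `θ`-fixed part of the principal congruence subgroup `K_E(m) = 1 + ϖ_E^m M_n(O_E)` equals
`K_F(k+1)` if `r ≠ 0` and `K_F(k)` if `r = 0`, where `m = k e + r`, `0 ≤ r < e`. -/
theorem stmt0 {p : ℕ} [Fact p.Prime] (n : ℕ)
    (F E : Type*) [NontriviallyNormedField F] [NontriviallyNormedField E]
    [NormedAlgebra ℚ_[p] F] [FiniteDimensional ℚ_[p] F]
    [Algebra F E] [FiniteDimensional F E] [IsGalois F E]
    (hiso : ∀ x : F, ‖algebraMap F E x‖ = ‖x‖)
    (θ : E ≃ₐ[F] E) (hθgen : ∀ σ : E ≃ₐ[F] E, σ ∈ Subgroup.zpowers θ)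
    (ϖE : E) (hE0 : ϖE ≠ 0) (hE1 : ‖ϖE‖ < 1) (hEmax : ∀ x : E, ‖x‖ < 1 → ‖x‖ ≤ ‖ϖE‖)
    (ϖF : F) (hF0 : ϖF ≠ 0) (hF1 : ‖ϖF‖ < 1) (hFmax : ∀ x : F, ‖x‖ < 1 → ‖x‖ ≤ ‖ϖF‖)
    (e : ℕ) (he : 0 < e) (hram : ‖algebraMap F E ϖF‖ = ‖ϖE‖ ^ e)
    (m k r : ℕ) (hm : 0 < m) (hr : r < e) (hkr : m = k * e + r) :
    {A : Matrix (Fin n) (Fin n) E |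
        (∀ i j, ‖(A - 1) i j‖ ≤ ‖ϖE‖ ^ m) ∧ A.map ⇑θ = A} =
      (fun B : Matrix (Fin n) (Fin n) F => B.map (algebraMap F E)) ''
        {B : Matrix (Fin n) (Fin n) F |
          ∀ i j, ‖(B - 1) i j‖ ≤ ‖ϖF‖ ^ (if r = 0 then k else k + 1)} := by
  have hcE0 : (0:ℝ) < ‖ϖE‖ := norm_pos_iff.mpr hE0
  have hcF0 : (0:ℝ) < ‖ϖF‖ := norm_pos_iff.mpr hF0
  have hϖF : ‖ϖF‖ = ‖ϖE‖ ^ e := by rw [← hiso ϖF, hram]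
  set s : ℕ := if r = 0 then k else k + 1 with hs
  have hse : m ≤ s * e := by
    rcases eq_or_ne r 0 with h | h
    · simp [hs, h, hkr]
    · rw [hkr, hs, if_neg h, add_mul, one_mul]
      exact Nat.add_le_add_left hr.le _
  -- every nonzero element of F has norm a zpow of ‖ϖF‖
  have hval : ∀ x : F, x ≠ 0 → ∃ j : ℤ, ‖x‖ = ‖ϖF‖ ^ j := by
    intro x hx
    have hx0 : (0:ℝ) < ‖x‖ := norm_pos_iff.mpr hx
    have hinv : (1:ℝ) < ‖ϖF‖⁻¹ := one_lt_inv_iff₀.mpr ⟨hcF0, hF1⟩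
    obtain ⟨j, hj1, hj2⟩ := exists_mem_Ioc_zpow hx0 hinv
    rw [inv_zpow, ← zpow_neg] at hj1 hj2
    set t : ℤ := -(j + 1) with ht
    have hj1' : ‖ϖF‖ ^ (t + 1) < ‖x‖ := by
      have : t + 1 = -j := by omega
      rw [this]; exact hj1
    have hj2' : ‖x‖ ≤ ‖ϖF‖ ^ t := hj2
    refine ⟨t, ?_⟩
    have hpt : (0:ℝ) < ‖ϖF‖ ^ t := zpow_pos hcF0 t
    have hyn : ‖x * (ϖF ^ t)⁻¹‖ = ‖x‖ / ‖ϖF‖ ^ t := by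
      rw [norm_mul, norm_inv, norm_zpow, div_eq_mul_inv]
    have h1 : ‖x * (ϖF ^ t)⁻¹‖ ≤ 1 := by
      rw [hyn, div_le_one hpt]; exact hj2'
    have h2 : ‖ϖF‖ < ‖x * (ϖF ^ t)⁻¹‖ := by
      rw [hyn, lt_div_iff₀ hpt, mul_comm, ← zpow_add_one₀ (ne_of_gt hcF0)]
      exact hj1'
    have hone : ‖x * (ϖF ^ t)⁻¹‖ = 1 := by
      rcases lt_or_eq_of_le h1 with hlt | heq
      · exact absurd (hFmax _ hlt) (not_le.mpr h2)
      · exact heq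
    have := hyn.symm.trans hone
    rw [div_eq_one_iff_eq (ne_of_gt hpt)] at this
    exact this
  -- norm comparison lemma
  have hms : ∀ x : F, (‖x‖ ≤ ‖ϖE‖ ^ m ↔ ‖x‖ ≤ ‖ϖF‖ ^ s) := by
    intro x
    rcases eq_or_ne x 0 with rfl | hx
    · simp [le_of_lt (pow_pos hcE0 m), le_of_lt (pow_pos hcF0 s)]
    constructor
    · intro h
      obtain ⟨j, hj⟩ := hval x hx
      rw [hj] at h ⊢
      rw [hϖF, ← zpow_natCast ‖ϖE‖ e, ← zpow_mul, ← zpow_natCast ‖ϖE‖ m] at h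
      rw [zpow_le_zpow_iff_right_of_lt_one₀ hcE0 hE1] at h
      have hse2 : s * e < m + e := by
        rcases eq_or_ne r 0 with h0 | h0
        · rw [hs, if_pos h0, hkr, h0]; omega
        · rw [hs, if_neg h0, hkr, add_mul, one_mul]; omega
      have hsj : (s:ℤ) ≤ j := by
        have h1 : (e:ℤ) * s < (e:ℤ) * (j + 1) := by
          have h2 : ((s * e : ℕ) : ℤ) < (m:ℤ) + e := by exact_mod_cast hse2
          push_cast at h2
          nlinarith [h, h2]
        have h3 : (s:ℤ) < j + 1 :=
          lt_of_mul_lt_mul_left h1 (by positivity)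
        omega
      calc ‖ϖF‖ ^ j ≤ ‖ϖF‖ ^ (s:ℤ) :=
            (zpow_le_zpow_iff_right_of_lt_one₀ hcF0 hF1).mpr hsj
        _ = ‖ϖF‖ ^ s := zpow_natCast _ _
    · intro h
      calc ‖x‖ ≤ ‖ϖF‖ ^ s := h
        _ = ‖ϖE‖ ^ (s * e) := by rw [hϖF, ← pow_mul, Nat.mul_comm]
        _ ≤ ‖ϖE‖ ^ m := pow_le_pow_of_le_one (le_of_lt hcE0) (le_of_lt hE1) hse
  -- fixed elements come from F
  have hbot : ∀ x : E, (∀ σ : E ≃ₐ[F] E, σ x = x) → ∃ b : F, algebraMap F E b = x := by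
    intro x hx
    have hmem : x ∈ IntermediateField.fixedField
        (IntermediateField.fixingSubgroup (⊥ : IntermediateField F E)) := fun g => hx g
    rw [IsGalois.fixedField_fixingSubgroup] at hmem
    exact IntermediateField.mem_bot.mp hmem
  ext A
  simp only [Set.mem_setOf_eq, Set.mem_image]
  constructor
  · rintro ⟨hnorm, hfix⟩
    have hent : ∀ i j, ∃ b : F, algebraMap F E b = A i j := by
      intro i j
      refine hbot _ (fun σ => ?_)
      have hθfix : θ (A i j) = A i j := by
        have := congrFun (congrFun hfix i) j
        simpa [Matrix.map_apply] using this
      have hstab : σ ∈ MulAction.stabilizer (E ≃ₐ[F] E) (A i j) := by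
        have hθ : θ ∈ MulAction.stabilizer (E ≃ₐ[F] E) (A i j) := hθfix
        exact Subgroup.zpowers_le.mpr hθ (hθgen σ)
      exact hstab
    choose B hB using hent
    refine ⟨Matrix.of B, fun i j => ?_, ?_⟩
    · have key : algebraMap F E ((Matrix.of B - 1) i j) = (A - 1) i j := by
        simp only [Matrix.sub_apply, Matrix.one_apply, map_sub, apply_ite (algebraMap F E),
          map_one, map_zero, Matrix.of_apply, hB]
      have : ‖(Matrix.of B - 1) i j‖ = ‖(A - 1) i j‖ := by rw [← hiso, key]
      exact (hms _).mp (this ▸ hnorm i j)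
    · ext i j
      simp [Matrix.map_apply, hB]
  · rintro ⟨B, hB, rfl⟩
    constructor
    · intro i j
      have key : algebraMap F E ((B - 1) i j) = (B.map (algebraMap F E) - 1) i j := by
        simp only [Matrix.sub_apply, Matrix.one_apply, map_sub, apply_ite (algebraMap F E),
          map_one, map_zero, Matrix.map_apply]
      rw [← key, hiso]
      exact (hms _).mpr (hB i j)
    · ext i j
      simp [Matrix.map_apply, AlgEquiv.commutes]
end

section
/- Let G be a topological group, p a prime, and d a positive integer with gcd(p, d) = 1. Suppose h₁, h₂ ∈ G are topologically unipotent (i.e., h^{p^n} → 1 as n → ∞) and g ∈ G satisfies (g⁻¹ h₁ g)^d = h₂^d. Then g⁻¹ h₁ g = h₂, provided g⁻¹ h₁ g is also topologically unipotent. -/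
/-- In a Hausdorff topological group, if `h₁, h₂` are topologically unipotent,
`g⁻¹ h₁ g` is topologically unipotent, `gcd(p,d)=1` and `(g⁻¹ h₁ g)^d = h₂^d`,
then `g⁻¹ h₁ g = h₂`. -/
theorem stmt1 {G : Type*} [Group G] [TopologicalSpace G] [IsTopologicalGroup G] [T2Space G]
    (p d : ℕ) (hp : p.Prime) (hd : 0 < d) (hpd : Nat.Coprime p d)
    (h₁ h₂ g : G)
    (H1 : Filter.Tendsto (fun m : ℕ => h₁ ^ p ^ m) Filter.atTop (nhds 1))
    (H2 : Filter.Tendsto (fun m : ℕ => h₂ ^ p ^ m) Filter.atTop (nhds 1))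
    (H3 : Filter.Tendsto (fun m : ℕ => (g⁻¹ * h₁ * g) ^ p ^ m) Filter.atTop (nhds 1))
    (heq : (g⁻¹ * h₁ * g) ^ d = h₂ ^ d) :
    g⁻¹ * h₁ * g = h₂ := by
  set x := g⁻¹ * h₁ * g with hx
  set y := h₂ with hy
  set k := d.totient with hk
  have hk0 : 0 < k := Nat.totient_pos.mpr hd
  have hp0 : 0 < p := hp.pos
  have hmod : ∀ m : ℕ, p ^ (k * m) ≡ 1 [MOD d] := by
    intro m
    have h1 : p ^ k ≡ 1 [MOD d] := Nat.ModEq.pow_totient hpd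
    calc p ^ (k * m) = (p ^ k) ^ m := by rw [pow_mul]
      _ ≡ 1 ^ m [MOD d] := h1.pow m
      _ = 1 := one_pow m
  have hc : ∀ m : ℕ, ∃ c : ℕ, p ^ (k * m) = 1 + d * c := by
    intro m
    have h1 : 1 ≤ p ^ (k * m) := Nat.one_le_pow _ _ hp0
    have hdvd : d ∣ p ^ (k * m) - 1 := (Nat.modEq_iff_dvd' h1).mp (hmod m).symm
    obtain ⟨c, hc⟩ := hdvd
    exact ⟨c, by omega⟩
  have key : ∀ m : ℕ, x ^ p ^ (k * m) = x * y ^ p ^ (k * m) * y⁻¹ := by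
    intro m
    obtain ⟨c, hcm⟩ := hc m
    rw [hcm, pow_add, pow_add, pow_one, pow_one, pow_mul, pow_mul, heq]
    group
  have hkm : Filter.Tendsto (fun m : ℕ => k * m) Filter.atTop Filter.atTop := by
    apply Filter.tendsto_atTop_atTop.mpr
    exact fun b => ⟨b, fun a ha => le_trans ha (Nat.le_mul_of_pos_left a hk0)⟩
  have hxlim : Filter.Tendsto (fun m : ℕ => x ^ p ^ (k * m)) Filter.atTop (nhds 1) :=
    H3.comp hkm
  have hylim : Filter.Tendsto (fun m : ℕ => x * y ^ p ^ (k * m) * y⁻¹) Filter.atTop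
      (nhds (x * 1 * y⁻¹)) :=
    ((Filter.Tendsto.const_mul x (H2.comp hkm)).mul_const y⁻¹)
  have hEq : (1 : G) = x * 1 * y⁻¹ := by
    refine tendsto_nhds_unique ?_ hylim
    simpa only [key] using hxlim
  have : x * y⁻¹ = 1 := by rw [mul_one] at hEq; exact hEq.symm
  exact mul_inv_eq_one.mp this
end

section
/- Let E/F be a cyclic degree-d extension of p-adic fields, p prime to d, θ a generator of Gal(E/F). Let H(F)_{tu} denote topologically unipotent elements of GL_n(F) and let U = {g(h⋊θ)g⁻¹ : g ∈ GL_n(E), h ∈ H(F)_{tu}} inside the twisted space G̃(F) = GL_n(E) ⋊ θ. Then the map h ↦ h⋊θ induces a bijection from GL_n(F)-conjugacy classes in H(F)_{tu} to GL_n(E)-twisted-conjugacy classes in U. -/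
open Matrix MvPolynomial Filter


lemma descent_conj {F E : Type*} [Field F] [Field E] [Algebra F E] [FiniteDimensional F E]
    [Infinite F] {n : ℕ} (A B : Matrix (Fin n) (Fin n) F) (G : Matrix (Fin n) (Fin n) E)
    (hG : IsUnit G)
    (hrel : (A.map (algebraMap F E)) * G = G * (B.map (algebraMap F E))) :
    ∃ K : Matrix (Fin n) (Fin n) F, IsUnit K ∧ A * K = K * B := by
  classical
  set σ := algebraMap F E
  set d' := Module.finrank F E
  let bE : Module.Basis (Fin d') F E := Module.finBasis F E
  set C : Fin d' → Matrix (Fin n) (Fin n) F :=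
    fun j => Matrix.of fun a c => bE.repr (G a c) j with hC
  have hGsum : ∀ a c, G a c = ∑ j, σ (C j a c) * bE j := by
    intro a c
    conv_lhs => rw [← bE.sum_repr (G a c)]
    refine Finset.sum_congr rfl fun j _ => ?_
    rw [Algebra.smul_def]
    rfl
  have hAC : ∀ j, A * C j = C j * B := by
    intro j
    ext a c
    have h : (A.map σ * G) a c = (G * B.map σ) a c := by rw [hrel]
    rw [Matrix.mul_apply, Matrix.mul_apply] at h
    have h2 : bE.coord j (∑ a', A.map σ a a' * G a' c)
        = bE.coord j (∑ c', G a c' * B.map σ c' c) := by rw [h]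
    simp only [Matrix.map_apply] at h2
    have hL : ∀ a', σ (A a a') * G a' c = (A a a') • G a' c := fun a' =>
      (Algebra.smul_def _ _).symm
    have hR : ∀ c', G a c' * σ (B c' c) = (B c' c) • G a c' := fun c' => by
      rw [mul_comm, Algebra.smul_def]
    simp only [hL, hR, map_sum, LinearMap.map_smul, smul_eq_mul,
      Module.Basis.coord_apply] at h2
    simp only [Matrix.mul_apply, hC, Matrix.of_apply]
    rw [h2]
    exact Finset.sum_congr rfl fun c' _ => mul_comm _ _
  -- polynomial
  set MP : Matrix (Fin n) (Fin n) (MvPolynomial (Fin d') F) :=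
    Matrix.of fun a c => ∑ j, MvPolynomial.C (C j a c) * MvPolynomial.X j with hMP
  set P : MvPolynomial (Fin d') F := MP.det with hP
  have hevalE : (MvPolynomial.aeval (fun j => (bE j : E))) P = G.det := by
    rw [hP, AlgHom.map_det]
    congr 1
    ext a c
    simp only [AlgHom.mapMatrix_apply, Matrix.map_apply, hMP, Matrix.of_apply]
    rw [map_sum, hGsum a c]
    refine Finset.sum_congr rfl fun j _ => ?_
    simp [σ]
  have hPne : P ≠ 0 := by
    intro h0
    rw [h0, map_zero] at hevalE
    exact ((Matrix.isUnit_iff_isUnit_det G).mp hG).ne_zero hevalE.symm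
  obtain ⟨w, hw⟩ : ∃ w : Fin d' → F, MvPolynomial.eval w P ≠ 0 := by
    by_contra hall
    push_neg at hall
    exact hPne (MvPolynomial.funext fun x => by rw [hall x, map_zero])
  set K : Matrix (Fin n) (Fin n) F := Matrix.of fun a c => ∑ j, C j a c * w j with hK
  have hKeval : (MvPolynomial.eval w) P = K.det := by
    rw [hP, RingHom.map_det]
    congr 1
    ext a c
    simp [hMP, hK]
  refine ⟨K, ?_, ?_⟩
  · rw [Matrix.isUnit_iff_isUnit_det, isUnit_iff_ne_zero, ← hKeval]
    exact hw
  · ext a c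
    simp only [Matrix.mul_apply, hK, Matrix.of_apply, Finset.mul_sum, Finset.sum_mul]
    rw [Finset.sum_comm]
    conv_rhs => rw [Finset.sum_comm]
    refine Finset.sum_congr rfl fun j _ => ?_
    have := congrFun (congrFun (hAC j) a) c
    simp only [Matrix.mul_apply] at this
    calc ∑ a', A a a' * (C j a' c * w j) = (∑ a', A a a' * C j a' c) * w j := by
          rw [Finset.sum_mul]; exact Finset.sum_congr rfl fun _ _ => (mul_assoc _ _ _).symm
      _ = (∑ c', C j a c' * B c' c) * w j := by rw [this]
      _ = ∑ c', C j a c' * w j * B c' c := by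
          rw [Finset.sum_mul]
          exact Finset.sum_congr rfl fun c' _ => by ring

/-- For `E/F` cyclic of degree `d` with `p ∤ d` and generator `θ`, the map
`h ↦ h⋊θ` induces a bijection from `GL_n(F)`-conjugacy classes of topologically unipotent
elements of `GL_n(F)` onto `GL_n(E)`-twisted-conjugacy classes in
`U = {g(h⋊θ)g⁻¹ : g ∈ GL_n(E), h ∈ GL_n(F)_tu}`: two topologically unipotent elements of
`GL_n(F)` are twisted-conjugate under `GL_n(E)` iff conjugate under `GL_n(F)`, and every
element of `U` is twisted-conjugate to some `h⋊θ` with `h ∈ GL_n(F)_tu`. -/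
theorem stmt11 {p : ℕ} [Fact p.Prime]
    (F E : Type*) [NontriviallyNormedField F] [NontriviallyNormedField E]
    [NormedAlgebra ℚ_[p] F] [FiniteDimensional ℚ_[p] F]
    [Algebra F E] [FiniteDimensional F E] [IsGalois F E]
    (θ : E ≃ₐ[F] E) (hθgen : ∀ σ : E ≃ₐ[F] E, σ ∈ Subgroup.zpowers θ)
    (d : ℕ) (hd : d = Module.finrank F E) (hpd : ¬ p ∣ d) (n : ℕ)
    (ι : (Matrix (Fin n) (Fin n) F)ˣ →* (Matrix (Fin n) (Fin n) E)ˣ)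
    (hι : ι = Units.map (RingHom.mapMatrix (m := Fin n) (algebraMap F E)).toMonoidHom)
    (θG : (Matrix (Fin n) (Fin n) E)ˣ →* (Matrix (Fin n) (Fin n) E)ˣ)
    (hθG : θG = Units.map
      ((AlgEquiv.mapMatrix (m := Fin n) θ).toAlgHom.toRingHom.toMonoidHom)) :
    (∀ h₁ h₂ : (Matrix (Fin n) (Fin n) F)ˣ,
      Filter.Tendsto (fun m : ℕ => h₁ ^ p ^ m) Filter.atTop (nhds 1) →
      Filter.Tendsto (fun m : ℕ => h₂ ^ p ^ m) Filter.atTop (nhds 1) →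
      ((∃ k : (Matrix (Fin n) (Fin n) F)ˣ, h₂ = k * h₁ * k⁻¹) ↔
       (∃ g : (Matrix (Fin n) (Fin n) E)ˣ, ι h₂ = g * ι h₁ * (θG g)⁻¹))) ∧
    (∀ u : (Matrix (Fin n) (Fin n) E)ˣ,
      (∃ g : (Matrix (Fin n) (Fin n) E)ˣ, ∃ h : (Matrix (Fin n) (Fin n) F)ˣ,
        Filter.Tendsto (fun m : ℕ => h ^ p ^ m) Filter.atTop (nhds 1) ∧
        u = g * ι h * (θG g)⁻¹) →
      ∃ h' : (Matrix (Fin n) (Fin n) F)ˣ,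
        Filter.Tendsto (fun m : ℕ => h' ^ p ^ m) Filter.atTop (nhds 1) ∧
        ∃ g' : (Matrix (Fin n) (Fin n) E)ˣ, u = g' * ι h' * (θG g')⁻¹) := by
  classical
  have hp : p.Prime := Fact.out
  -- basic facts
  haveI : CharZero F := charZero_of_injective_algebraMap (algebraMap ℚ_[p] F).injective
  have hd0 : d ≠ 0 := fun h => hpd (h ▸ dvd_zero p)
  haveI : NeZero d := ⟨hd0⟩
  -- θ^d = 1
  have hθd : θ ^ d = 1 := by
    rw [hd, ← IsGalois.card_aut_eq_finrank F E]
    exact pow_card_eq_one'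
  -- θG fixes image of ι
  have hιval : ∀ h : (Matrix (Fin n) (Fin n) F)ˣ,
      (ι h).val = (h.val).map (algebraMap F E) := by
    intro h; rw [hι]; rfl
  have hθGval : ∀ g : (Matrix (Fin n) (Fin n) E)ˣ,
      (θG g).val = (g.val).map θ := by
    intro g; rw [hθG]; rfl
  have hfixM : ∀ (τ : E ≃ₐ[F] E) (X : Matrix (Fin n) (Fin n) F),
      (X.map (algebraMap F E)).map τ = X.map (algebraMap F E) := by
    intro τ X
    rw [Matrix.map_map]
    ext a c
    simp [Matrix.map_apply, AlgEquiv.commutes]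
  have hfix : ∀ h : (Matrix (Fin n) (Fin n) F)ˣ, θG (ι h) = ι h := by
    intro h
    ext : 1
    rw [hθGval, hιval, hfixM]
  constructor
  · intro h₁ h₂ hT₁ hT₂
    constructor
    · rintro ⟨k, rfl⟩
      refine ⟨ι k, ?_⟩
      rw [hfix k, _root_.map_mul, _root_.map_mul, map_inv]
    · rintro ⟨g, hg⟩
      -- matrix level equation over E
      have hg' : ι h₂ * θG g = g * ι h₁ := by
        rw [hg, inv_mul_cancel_right]
      have e₀ : (h₂.val.map (algebraMap F E)) * (g.val.map θ)
          = g.val * (h₁.val.map (algebraMap F E)) := by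
        have := congrArg Units.val hg'
        simpa [Units.val_mul, hιval, hθGval] using this
      -- iterate
      have claim : ∀ j : ℕ, ((h₂.val ^ j).map (algebraMap F E)) * (g.val.map (θ ^ j))
          = g.val * ((h₁.val ^ j).map (algebraMap F E)) := by
        intro j
        induction j with
        | zero =>
            have hone : (g.val).map ⇑(θ ^ 0 : E ≃ₐ[F] E) = g.val := by
              ext a c; simp
            rw [hone, pow_zero, pow_zero]
            simp [Matrix.map_one (algebraMap F E) (map_zero _) (map_one _)]
        | succ j ih =>
            have e₁ : (h₂.val.map (algebraMap F E)) * (g.val.map (θ ^ (j + 1)))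
                = (g.val.map (θ ^ j)) * (h₁.val.map (algebraMap F E)) := by
              have hcomp : (⇑(θ ^ j : E ≃ₐ[F] E)) ∘ (⇑θ) = ⇑(θ ^ (j+1) : E ≃ₐ[F] E) := by
                funext x
                simp [pow_succ, AlgEquiv.mul_apply]
              have e₁' := congrArg
                (RingHom.mapMatrix (m := Fin n) ((θ ^ j : E ≃ₐ[F] E).toAlgHom.toRingHom)) e₀
              simp only [_root_.map_mul, RingHom.mapMatrix_apply] at e₁'
              have hcoe : ⇑((θ ^ j : E ≃ₐ[F] E).toAlgHom.toRingHom) = ⇑(θ ^ j : E ≃ₐ[F] E) :=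
                rfl
              rw [hcoe] at e₁'
              rw [hfixM (θ ^ j) h₂.val, hfixM (θ ^ j) h₁.val, Matrix.map_map, hcomp] at e₁'
              exact e₁'
            have hmulmap : ∀ (X Y : Matrix (Fin n) (Fin n) F),
                ((X * Y).map (algebraMap F E)) =
                (X.map (algebraMap F E)) * (Y.map (algebraMap F E)) := by
              intro X Y
              exact (RingHom.mapMatrix (algebraMap F E)).map_mul X Y
            calc ((h₂.val ^ (j+1)).map (algebraMap F E)) * (g.val.map (θ ^ (j+1)))
                = ((h₂.val ^ j).map (algebraMap F E)) *
                  ((h₂.val.map (algebraMap F E)) * (g.val.map (θ ^ (j+1)))) := by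
                  rw [pow_succ, hmulmap, mul_assoc]
              _ = ((h₂.val ^ j).map (algebraMap F E)) * (g.val.map (θ ^ j))
                  * (h₁.val.map (algebraMap F E)) := by rw [e₁, mul_assoc]
              _ = g.val * ((h₁.val ^ (j+1)).map (algebraMap F E)) := by
                  rw [ih, pow_succ, hmulmap, mul_assoc]
      have claimd : ((h₂.val ^ d).map (algebraMap F E)) * g.val
          = g.val * ((h₁.val ^ d).map (algebraMap F E)) := by
        have := claim d
        rw [hθd] at this
        have hone : (g.val).map ⇑(1 : E ≃ₐ[F] E) = g.val := by
          ext a c; simp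
        rwa [hone] at this
      -- descent
      obtain ⟨K, hKunit, hKeq⟩ := descent_conj (h₂.val ^ d) (h₁.val ^ d) g.val
        g.isUnit claimd
      obtain ⟨kU, hkU⟩ := hKunit
      -- limit trick over F
      have hcop : Nat.Coprime p d := (Nat.Prime.coprime_iff_not_dvd hp).mpr hpd
      set u : (ZMod d)ˣ := ZMod.unitOfCoprime p hcop with hu
      set r : ℕ := orderOf u with hr
      have hrpos : 0 < r := orderOf_pos u
      have hdc : ∀ t : ℕ, ∃ c : ℕ, p ^ (t * r) = d * c + 1 := by
        intro t
        have h1 : (u ^ (t * r) : (ZMod d)ˣ) = 1 := by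
          rw [mul_comm, pow_mul, pow_orderOf_eq_one, one_pow]
        have h2 : ((p ^ (t * r) : ℕ) : ZMod d) = ((1 : ℕ) : ZMod d) := by
          push_cast
          have := congrArg (Units.val) h1
          rw [Units.val_pow_eq_pow_val, ZMod.coe_unitOfCoprime] at this
          simpa using this
        have h3 : 1 ≡ p ^ (t * r) [MOD d] := ((ZMod.natCast_eq_natCast_iff _ _ _).mp h2).symm
        obtain ⟨c, hc⟩ := (Nat.modEq_iff_dvd' (Nat.one_le_pow _ _ hp.pos)).mp h3
        have hge : 1 ≤ p ^ (t * r) := Nat.one_le_pow _ _ hp.pos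
        exact ⟨c, by omega⟩
      have hsc : SemiconjBy kU (h₁ ^ d) (h₂ ^ d) := by
        rw [SemiconjBy]
        ext : 1
        simpa [Units.val_mul, Units.val_pow_eq_pow_val, hkU] using hKeq.symm
      have key : ∀ t : ℕ, (h₂ ^ (p ^ (t * r))) * (kU * h₁) = (h₂ * kU) * h₁ ^ (p ^ (t * r)) := by
        intro t
        obtain ⟨c, hc⟩ := hdc t
        have hsc' := hsc.pow_right c
        rw [SemiconjBy] at hsc'
        rw [hc]
        calc h₂ ^ (d * c + 1) * (kU * h₁)
            = h₂ * ((h₂ ^ d) ^ c * kU) * h₁ := by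
              rw [← pow_mul, pow_succ', mul_assoc, mul_assoc, mul_assoc]
          _ = h₂ * (kU * (h₁ ^ d) ^ c) * h₁ := by rw [← hsc']
          _ = (h₂ * kU) * h₁ ^ (d * c + 1) := by
              rw [← pow_mul, pow_succ, mul_assoc, mul_assoc, mul_assoc]
      -- take limits
      have hmono : Tendsto (fun t : ℕ => t * r) atTop atTop :=
        Filter.tendsto_atTop_mono (fun t => Nat.le_mul_of_pos_right t hrpos) tendsto_id
      have hv : ∀ (h : (Matrix (Fin n) (Fin n) F)ˣ),
          Tendsto (fun m : ℕ => h ^ p ^ m) atTop (nhds 1) →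
          Tendsto (fun t : ℕ => (h.val) ^ p ^ (t * r)) atTop (nhds 1) := by
        intro h hT
        have := (Units.continuous_val.tendsto 1).comp (hT.comp hmono)
        simpa [Function.comp_def, Units.val_pow_eq_pow_val] using this
      have lim1 : Tendsto (fun t : ℕ => (h₂.val) ^ p ^ (t * r) * (K * h₁.val)) atTop
          (nhds (K * h₁.val)) := by
        have := (hv h₂ hT₂).mul
          (tendsto_const_nhds :
            Tendsto (fun _ : ℕ => K * h₁.val) atTop (nhds (K * h₁.val)))
        simpa using this
      have lim2 : Tendsto (fun t : ℕ => (h₂.val) ^ p ^ (t * r) * (K * h₁.val)) atTop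
          (nhds (h₂.val * K)) := by
        have heq : (fun t : ℕ => (h₂.val) ^ p ^ (t * r) * (K * h₁.val))
            = fun t : ℕ => (h₂.val * K) * (h₁.val) ^ p ^ (t * r) := by
          funext t
          have := congrArg Units.val (key t)
          simpa [Units.val_mul, Units.val_pow_eq_pow_val, hkU, mul_assoc] using this
        rw [heq]
        have := (tendsto_const_nhds :
            Tendsto (fun _ : ℕ => h₂.val * K) atTop (nhds (h₂.val * K))).mul (hv h₁ hT₁)
        simpa using this
      have hfinal : K * h₁.val = h₂.val * K := tendsto_nhds_unique lim1 lim2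
      have hfinalU : kU * h₁ = h₂ * kU := by
        ext : 1
        rw [Units.val_mul, Units.val_mul, hkU]
        exact hfinal
      exact ⟨kU, eq_mul_inv_iff_mul_eq.mpr hfinalU.symm⟩
  · rintro u ⟨g, h, hh, hu⟩
    exact ⟨h, hh, g, hu⟩
end

section
/- Let F be a p-adic field with p odd, and let L ⊂ M_n(F) be an O_F-lattice consisting of topologically nilpotent elements with L·L ⊂ ϖ_F L. Then K_L := c(L) = 1 + L is a compact open subgroup of GL_n(F) consisting of topologically unipotent elements, where c is the Cayley transform. -/
attribute [local instance] Matrix.linftyOpNormedRing Matrix.linftyOpNormedAlgebra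

/-- The Cayley transform `c(X) = (1 + X/2)(1 - X/2)⁻¹` on matrices. -/
noncomputable def cayley {F : Type*} [Field F] {n : ℕ}
    (X : Matrix (Fin n) (Fin n) F) : Matrix (Fin n) (Fin n) F :=
  (1 + (2⁻¹ : F) • X) * Ring.inverse (1 - (2⁻¹ : F) • X)

/-- For an `O_F`-lattice `L ⊂ M_n(F)` of topologically nilpotent elements with
`L·L ⊂ ϖ_F L` (`p` odd), the set `K_L := c(L) = 1 + L` is a compact open subgroup of
`GL_n(F)` consisting of topologically unipotent elements. -/
theorem stmt12 {p : ℕ} [Fact p.Prime] (hp2 : p ≠ 2)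
    (F : Type*) [NontriviallyNormedField F] [NormedAlgebra ℚ_[p] F]
    [FiniteDimensional ℚ_[p] F] [IsUltrametricDist F]
    (ϖ : F) (hϖ0 : ϖ ≠ 0) (hϖ1 : ‖ϖ‖ < 1) (hϖmax : ∀ x : F, ‖x‖ < 1 → ‖x‖ ≤ ‖ϖ‖)
    (n : ℕ) (L : Set (Matrix (Fin n) (Fin n) F))
    (h0 : (0 : Matrix (Fin n) (Fin n) F) ∈ L)
    (hadd : ∀ X ∈ L, ∀ Y ∈ L, X + Y ∈ L)
    (hneg : ∀ X ∈ L, -X ∈ L)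
    (hsmul : ∀ a : F, ‖a‖ ≤ 1 → ∀ X ∈ L, a • X ∈ L)
    (hspan : Submodule.span F L = ⊤)
    (hcpt : IsCompact L) (hopen : IsOpen L)
    (htn : ∀ X ∈ L, Filter.Tendsto (fun m : ℕ => X ^ p ^ m) Filter.atTop (nhds 0))
    (hmul : ∀ X ∈ L, ∀ Y ∈ L, ∃ Z ∈ L, X * Y = ϖ • Z)
    (K : Set (Matrix (Fin n) (Fin n) F))
    (hK : K = {A : Matrix (Fin n) (Fin n) F | A - 1 ∈ L}) :
    (∀ X ∈ L, IsUnit (1 - (2⁻¹ : F) • X)) ∧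
    cayley '' L = K ∧
    (∀ A ∈ K, IsUnit A) ∧
    (1 : Matrix (Fin n) (Fin n) F) ∈ K ∧
    (∀ A ∈ K, ∀ B ∈ K, A * B ∈ K) ∧
    (∀ A ∈ K, Ring.inverse A ∈ K) ∧
    IsCompact K ∧ IsOpen K ∧
    (∀ A ∈ K, Filter.Tendsto (fun m : ℕ => A ^ p ^ m) Filter.atTop (nhds 1)) := by
  subst hK
  haveI : CompleteSpace F := FiniteDimensional.complete ℚ_[p] F
  haveI : CompleteSpace (Matrix (Fin n) (Fin n) F) :=
    inferInstanceAs (CompleteSpace (∀ _ : Fin n, ∀ _ : Fin n, F))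
  haveI : CharZero F := charZero_of_injective_algebraMap (algebraMap ℚ_[p] F).injective
  have hp := (Fact.out : p.Prime)
  have hϖle : ‖ϖ‖ ≤ 1 := hϖ1.le
  have hϖpos : (0:ℝ) < ‖ϖ‖ := norm_pos_iff.mpr hϖ0
  -- norm of 2 is 1
  have h2Q : ‖(2 : ℚ_[p])‖ = 1 := by
    have hd : ¬ ((p:ℤ) ∣ (2:ℤ)) := by
      intro h
      have h1 : p ∣ 2 := by exact_mod_cast h
      have h2 := Nat.le_of_dvd (by norm_num) h1
      have h3 := hp.two_le
      omega
    have h1 : ¬ (‖((2:ℤ) : ℚ_[p])‖ < 1) := fun h => hd ((Padic.norm_intCast_lt_one_iff (k := 2)).mp h)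
    have h2 : ‖((2:ℤ) : ℚ_[p])‖ ≤ 1 := Padic.norm_int_le_one 2
    push_cast at h1 h2
    linarith [lt_or_ge (‖(2:ℚ_[p])‖) 1]
  have h2F : ‖(2 : F)‖ = 1 := by
    have h : ((2:F)) = algebraMap ℚ_[p] F (2 : ℚ_[p]) := (map_ofNat (algebraMap ℚ_[p] F) 2).symm
    rw [h, norm_algebraMap' F (2 : ℚ_[p]), h2Q]
  have h2i : ‖(2⁻¹ : F)‖ ≤ 1 := by
    rw [norm_inv, h2F]; norm_num
  have hpF : ‖(p : F)‖ < 1 := by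
    have h : ((p:F)) = algebraMap ℚ_[p] F ((p : ℚ_[p])) := (map_natCast (algebraMap ℚ_[p] F) p).symm
    rw [h, norm_algebraMap' F, Padic.norm_p, inv_lt_one_iff₀]
    right
    exact_mod_cast hp.one_lt
  have hpϖ : ‖(p : F) * ϖ⁻¹‖ ≤ 1 := by
    rw [norm_mul, norm_inv, ← div_eq_mul_inv, div_le_one hϖpos]
    exact hϖmax _ hpF
  -- bound on L
  obtain ⟨C, hC⟩ : ∃ C, ∀ Z ∈ L, ‖Z‖ ≤ C := isBounded_iff_forall_norm_le.mp hcpt.isBounded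
  have hC0 : 0 ≤ C := le_trans (norm_nonneg _) (hC 0 h0)
  -- products stay in L
  have hmul' : ∀ X ∈ L, ∀ Y ∈ L, X * Y ∈ L := by
    intro X hX Y hY
    obtain ⟨Z, hZ, hE⟩ := hmul X hX Y hY
    rw [hE]; exact hsmul ϖ hϖle Z hZ
  -- powers
  have hXk : ∀ X ∈ L, ∀ k : ℕ, ∃ Z ∈ L, X ^ (k+1) = ϖ ^ k • Z := by
    intro X hX k
    induction k with
    | zero => exact ⟨X, hX, by simp⟩
    | succ k ih =>
      obtain ⟨Z, hZ, hE⟩ := ih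
      obtain ⟨Z', hZ', hE'⟩ := hmul Z hZ X hX
      refine ⟨Z', hZ', ?_⟩
      rw [pow_succ, hE, smul_mul_assoc, hE', smul_smul, ← pow_succ]
  -- powers tend to zero
  have htend0 : ∀ X ∈ L, Filter.Tendsto (fun N : ℕ => X ^ N) Filter.atTop (nhds 0) := by
    intro X hX
    apply squeeze_zero_norm' (a := fun N => (C / ‖ϖ‖) * ‖ϖ‖ ^ N)
    · filter_upwards [Filter.eventually_ge_atTop 1] with N hN
      obtain ⟨Z, hZ, hE⟩ := hXk X hX (N - 1)
      rw [show N - 1 + 1 = N by omega] at hE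
      rw [hE, norm_smul, norm_pow]
      have h1 : ‖ϖ‖ ^ N = ‖ϖ‖ ^ (N - 1) * ‖ϖ‖ := by
        conv_lhs => rw [show N = (N - 1) + 1 from (Nat.succ_pred_eq_of_pos hN).symm]
        rw [pow_succ]
      rw [h1]
      calc ‖ϖ‖ ^ (N-1) * ‖Z‖ ≤ ‖ϖ‖ ^ (N-1) * C :=
            mul_le_mul_of_nonneg_left (hC Z hZ) (by positivity)
        _ = C / ‖ϖ‖ * (‖ϖ‖ ^ (N - 1) * ‖ϖ‖) := by
            field_simp
    · have h := (tendsto_pow_atTop_nhds_zero_of_lt_one (norm_nonneg ϖ) hϖ1).const_mul (C / ‖ϖ‖)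
      simpa using h
  -- 1 - X is a unit for X ∈ L
  have hunit : ∀ X ∈ L, IsUnit ((1 : Matrix (Fin n) (Fin n) F) - X) := by
    intro X hX
    obtain ⟨N, hN⟩ : ∃ N, ‖ϖ‖ ^ N * C < 1 := by
      have h := (tendsto_pow_atTop_nhds_zero_of_lt_one (norm_nonneg ϖ) hϖ1).mul_const C
      rw [zero_mul] at h
      exact (h.eventually_lt_const one_pos).exists
    have hk : ‖X ^ (N + 1)‖ < 1 := by
      obtain ⟨Z, hZ, hE⟩ := hXk X hX N
      rw [hE, norm_smul, norm_pow]
      calc ‖ϖ‖ ^ N * ‖Z‖ ≤ ‖ϖ‖ ^ N * C := mul_le_mul_of_nonneg_left (hC Z hZ) (by positivity)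
        _ < 1 := hN
    have cab : Commute ((1 : Matrix (Fin n) (Fin n) F) - X)
        (∑ i ∈ Finset.range (N + 1), X ^ i) :=
      Commute.sum_right _ _ _ fun i _ =>
        (((Commute.one_left X).sub_left (Commute.refl X)).pow_right i)
    have hab : ((1 : Matrix (Fin n) (Fin n) F) - X) * (∑ i ∈ Finset.range (N + 1), X ^ i)
        = 1 - X ^ (N + 1) := mul_neg_geom_sum X (N + 1)
    have hu : IsUnit (((1 : Matrix (Fin n) (Fin n) F) - X)
        * (∑ i ∈ Finset.range (N + 1), X ^ i)) := by
      rw [hab]; have : @CompleteSpace (Matrix (Fin n) (Fin n) F) PseudoMetricSpace.toUniformSpace := FiniteDimensional.complete F _; exact (Units.oneSub _ hk).isUnit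
    exact (cab.isUnit_mul_iff.mp hu).1
  -- right series lemma: X * (1 - W)⁻¹ ∈ L
  have hXR : ∀ X ∈ L, ∀ W ∈ L, X * Ring.inverse (1 - W) ∈ L := by
    intro X hX W hW
    set R := Ring.inverse ((1 : Matrix (Fin n) (Fin n) F) - W) with hR
    have hu := hunit W hW
    have hXWk : ∀ k : ℕ, X * W ^ k ∈ L := by
      intro k
      induction k with
      | zero => simpa using hX
      | succ k ih =>
        rw [pow_succ, ← mul_assoc]
        exact hmul' _ ih _ hW
    have hSN : ∀ N : ℕ, X * (∑ i ∈ Finset.range N, W ^ i) ∈ L := by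
      intro N
      induction N with
      | zero => simpa using h0
      | succ N ih =>
        rw [Finset.sum_range_succ, mul_add]
        exact hadd _ ih _ (hXWk N)
    have hgeom : ∀ N : ℕ, (∑ i ∈ Finset.range N, W ^ i) = R - R * W ^ N := by
      intro N
      have h1 : ((1 : Matrix (Fin n) (Fin n) F) - W) * (∑ i ∈ Finset.range N, W ^ i)
          = 1 - W ^ N := mul_neg_geom_sum W N
      have h2 : R * (((1 : Matrix (Fin n) (Fin n) F) - W) * (∑ i ∈ Finset.range N, W ^ i))
          = R * (1 - W ^ N) := by rw [h1]
      rwa [← mul_assoc, Ring.inverse_mul_cancel _ hu, one_mul, mul_sub, mul_one] at h2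
    have htt : Filter.Tendsto (fun N : ℕ => X * (∑ i ∈ Finset.range N, W ^ i))
        Filter.atTop (nhds (X * R)) := by
      have heq : (fun N : ℕ => X * (∑ i ∈ Finset.range N, W ^ i))
          = fun N : ℕ => X * R - (X * R) * W ^ N := by
        funext N
        rw [hgeom N, mul_sub, mul_assoc]
      rw [heq]
      have h3 : Filter.Tendsto (fun N : ℕ => (X * R) * W ^ N) Filter.atTop (nhds 0) := by
        have h := (htend0 W hW).const_mul (X * R)
        simpa using h
      have h4 := Filter.Tendsto.sub (tendsto_const_nhds (x := X * R)) h3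
      simpa using h4
    exact hcpt.isClosed.mem_of_tendsto htt (Filter.Eventually.of_forall hSN)
  -- left series lemma: (1 - W)⁻¹ * X ∈ L
  have hRX : ∀ W ∈ L, ∀ X ∈ L, Ring.inverse (1 - W) * X ∈ L := by
    intro W hW X hX
    set R := Ring.inverse ((1 : Matrix (Fin n) (Fin n) F) - W) with hR
    have hu := hunit W hW
    have hWkX : ∀ k : ℕ, W ^ k * X ∈ L := by
      intro k
      induction k with
      | zero => simpa using hX
      | succ k ih =>
        rw [pow_succ', mul_assoc]
        exact hmul' _ hW _ ih
    have hSN : ∀ N : ℕ, (∑ i ∈ Finset.range N, W ^ i) * X ∈ L := by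
      intro N
      induction N with
      | zero => simpa using h0
      | succ N ih =>
        rw [Finset.sum_range_succ, add_mul]
        exact hadd _ ih _ (hWkX N)
    have hgeom : ∀ N : ℕ, (∑ i ∈ Finset.range N, W ^ i) = R - W ^ N * R := by
      intro N
      have h1 : (∑ i ∈ Finset.range N, W ^ i) * ((1 : Matrix (Fin n) (Fin n) F) - W)
          = 1 - W ^ N := by
        have hg := geom_sum_mul W N
        have h2 : (∑ i ∈ Finset.range N, W ^ i) * ((1 : Matrix (Fin n) (Fin n) F) - W)
            = -((∑ i ∈ Finset.range N, W ^ i) * (W - 1)) := by noncomm_ring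
        rw [h2, hg, neg_sub]
      have h2 : ((∑ i ∈ Finset.range N, W ^ i) * ((1 : Matrix (Fin n) (Fin n) F) - W)) * R
          = (1 - W ^ N) * R := by rw [h1]
      rwa [mul_assoc, Ring.mul_inverse_cancel _ hu, mul_one, sub_mul, one_mul] at h2
    have htt : Filter.Tendsto (fun N : ℕ => (∑ i ∈ Finset.range N, W ^ i) * X)
        Filter.atTop (nhds (R * X)) := by
      have heq : (fun N : ℕ => (∑ i ∈ Finset.range N, W ^ i) * X)
          = fun N : ℕ => R * X - W ^ N * (R * X) := by
        funext N
        rw [hgeom N, sub_mul, mul_assoc]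
      rw [heq]
      have h3 : Filter.Tendsto (fun N : ℕ => W ^ N * (R * X)) Filter.atTop (nhds 0) := by
        have h := (htend0 W hW).mul_const (R * X)
        simpa using h
      have h4 := Filter.Tendsto.sub (tendsto_const_nhds (x := R * X)) h3
      simpa using h4
    exact hcpt.isClosed.mem_of_tendsto htt (Filter.Eventually.of_forall hSN)
  -- statement 1
  have S1 : ∀ X ∈ L, IsUnit ((1 : Matrix (Fin n) (Fin n) F) - (2⁻¹ : F) • X) :=
    fun X hX => hunit _ (hsmul _ h2i X hX)
  -- statement 2
  have S2 : cayley '' L = {A : Matrix (Fin n) (Fin n) F | A - 1 ∈ L} := by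
    ext A
    constructor
    · rintro ⟨X, hX, rfl⟩
      show cayley X - 1 ∈ L
      have hY : (2⁻¹ : F) • X ∈ L := hsmul _ h2i X hX
      have hu : IsUnit ((1 : Matrix (Fin n) (Fin n) F) - (2⁻¹ : F) • X) := hunit _ hY
      have key : cayley X - 1 = X * Ring.inverse (1 - (2⁻¹ : F) • X) := by
        unfold cayley
        have hYY : (2⁻¹:F) • X + (2⁻¹:F) • X = X := by
          rw [← add_smul]; norm_num
        have hsplit : (1 : Matrix (Fin n) (Fin n) F) + (2⁻¹:F) • X
            = X + (1 - (2⁻¹:F) • X) := by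
          calc (1 : Matrix (Fin n) (Fin n) F) + (2⁻¹:F) • X
              = ((2⁻¹:F) • X + (2⁻¹:F) • X) + (1 - (2⁻¹:F) • X) := by abel
            _ = X + (1 - (2⁻¹:F) • X) := by rw [hYY]
        rw [hsplit, add_mul, Ring.mul_inverse_cancel _ hu]
        abel
      rw [key]
      exact hXR X hX _ hY
    · intro hA
      set U := A - 1 with hU
      have hUL : U ∈ L := hA
      have hnU : -U ∈ L := hneg U hUL
      have hW : (2⁻¹ : F) • (-U) ∈ L := hsmul _ h2i _ hnU
      have hD : (1 : Matrix (Fin n) (Fin n) F) + (2⁻¹ : F) • U = 1 - (2⁻¹ : F) • (-U) := by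
        rw [smul_neg, sub_neg_eq_add]
      have hu : IsUnit ((1 : Matrix (Fin n) (Fin n) F) + (2⁻¹ : F) • U) := by
        rw [hD]; exact hunit _ hW
      set V := Ring.inverse ((1 : Matrix (Fin n) (Fin n) F) + (2⁻¹ : F) • U) with hV
      have hDV : ((1 : Matrix (Fin n) (Fin n) F) + (2⁻¹ : F) • U) * V = 1 :=
        Ring.mul_inverse_cancel _ hu
      have hVD : V * ((1 : Matrix (Fin n) (Fin n) F) + (2⁻¹ : F) • U) = 1 :=
        Ring.inverse_mul_cancel _ hu
      have hXL : U * V ∈ L := by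
        have h1 : (-U) * Ring.inverse (1 - (2⁻¹:F) • (-U)) ∈ L := hXR _ hnU _ hW
        rw [← hD] at h1
        have h2 := hneg _ h1
        rwa [neg_mul, neg_neg] at h2
      refine ⟨U * V, hXL, ?_⟩
      have h1 : V + (2⁻¹ : F) • (U * V) = 1 := by
        have h : ((1 : Matrix (Fin n) (Fin n) F) + (2⁻¹ : F) • U) * V
            = V + (2⁻¹ : F) • (U * V) := by
          rw [add_mul, one_mul, smul_mul_assoc]
        rw [← h, hDV]
      have hv : (1 : Matrix (Fin n) (Fin n) F) - (2⁻¹ : F) • (U * V) = V :=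
        (eq_sub_of_add_eq h1).symm
      have h1y : (1 : Matrix (Fin n) (Fin n) F) + (2⁻¹ : F) • (U * V) = A * V := by
        have hA1 : A = 1 + U := by rw [hU]; abel
        have h2 : A * V = V + U * V := by rw [hA1, add_mul, one_mul]
        have h3 : U * V = (2⁻¹ : F) • (U * V) + (2⁻¹ : F) • (U * V) := by
          rw [← add_smul]; norm_num
        rw [h2]
        calc (1 : Matrix (Fin n) (Fin n) F) + (2⁻¹ : F) • (U * V)
            = (V + (2⁻¹ : F) • (U * V)) + (2⁻¹ : F) • (U * V) := by rw [h1]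
          _ = V + ((2⁻¹ : F) • (U * V) + (2⁻¹ : F) • (U * V)) := by abel
          _ = V + U * V := by rw [← h3]
      have hVu : IsUnit V := ⟨⟨V, 1 + (2⁻¹ : F) • U, hVD, hDV⟩, rfl⟩
      have hinvV : Ring.inverse V = 1 + (2⁻¹ : F) • U := by
        have h : Ring.inverse V * (V * ((1 : Matrix (Fin n) (Fin n) F) + (2⁻¹ : F) • U))
            = Ring.inverse V := by rw [hVD, mul_one]
        rw [← mul_assoc, Ring.inverse_mul_cancel _ hVu, one_mul] at h
        exact h.symm
      unfold cayley
      rw [h1y, hv, hinvV, mul_assoc, hVD, mul_one]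
  -- statement 3
  have S3 : ∀ A ∈ {A : Matrix (Fin n) (Fin n) F | A - 1 ∈ L}, IsUnit A := by
    intro A hA
    have h : A = 1 - (-(A - 1)) := by abel
    rw [h]
    exact hunit _ (hneg _ hA)
  -- statement 5
  have S5 : ∀ A ∈ {A : Matrix (Fin n) (Fin n) F | A - 1 ∈ L},
      ∀ B ∈ {A : Matrix (Fin n) (Fin n) F | A - 1 ∈ L},
      A * B ∈ {A : Matrix (Fin n) (Fin n) F | A - 1 ∈ L} := by
    intro A hA B hB
    show A * B - 1 ∈ L
    have key : A * B - 1 = (A - 1) + (B - 1) + (A - 1) * (B - 1) := by noncomm_ring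
    rw [key]
    exact hadd _ (hadd _ hA _ hB) _ (hmul' _ hA _ hB)
  -- statement 6
  have S6 : ∀ A ∈ {A : Matrix (Fin n) (Fin n) F | A - 1 ∈ L},
      Ring.inverse A ∈ {A : Matrix (Fin n) (Fin n) F | A - 1 ∈ L} := by
    intro A hA
    show Ring.inverse A - 1 ∈ L
    have hu : IsUnit A := S3 A hA
    have key : Ring.inverse A - 1 = -(Ring.inverse A * (A - 1)) := by
      rw [mul_sub, mul_one, Ring.inverse_mul_cancel _ hu]
      abel
    rw [key]
    have hAeq : A = 1 - (-(A - 1)) := by abel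
    have h1 : Ring.inverse (1 - (-(A-1))) * (A - 1) ∈ L := hRX _ (hneg _ hA) _ hA
    rw [← hAeq] at h1
    exact hneg _ h1
  -- statement 7 and 8
  have S7 : IsCompact {A : Matrix (Fin n) (Fin n) F | A - 1 ∈ L} := by
    have himg : {A : Matrix (Fin n) (Fin n) F | A - 1 ∈ L} = (fun U => U + 1) '' L := by
      ext A
      simp only [Set.mem_image, Set.mem_setOf_eq]
      constructor
      · intro h; exact ⟨A - 1, h, by abel⟩
      · rintro ⟨U, hU, rfl⟩; simpa using hU
    rw [himg]
    exact hcpt.image (continuous_id.add continuous_const)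
  have S8 : IsOpen {A : Matrix (Fin n) (Fin n) F | A - 1 ∈ L} := by
    have h : {A : Matrix (Fin n) (Fin n) F | A - 1 ∈ L} = (fun A => A - 1) ⁻¹' L := rfl
    rw [h]
    exact hopen.preimage (continuous_id.sub continuous_const)
  -- step lemma for topological unipotence
  have hstep : ∀ (c : F), ‖c‖ ≤ 1 → ∀ U ∈ L, ∃ U' ∈ L,
      ((1 : Matrix (Fin n) (Fin n) F) + c • U) ^ p = 1 + (c * ϖ) • U' := by
    intro c hc U hU
    set B := (1 : Matrix (Fin n) (Fin n) F) + c • U with hB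
    have hpowB : ∀ i : ℕ, ∃ V ∈ L, B ^ i = 1 + c • V := by
      intro i
      induction i with
      | zero => exact ⟨0, h0, by simp⟩
      | succ i ih =>
        obtain ⟨V, hV, hE⟩ := ih
        obtain ⟨Z, hZ, hZE⟩ := hmul V hV U hU
        refine ⟨U + V + (c * ϖ) • Z, ?_, ?_⟩
        · exact hadd _ (hadd _ hU _ hV) _
            (hsmul _ (by rw [norm_mul]; exact mul_le_one₀ hc (norm_nonneg _) hϖle) _ hZ)
        · rw [pow_succ, hE]
          have hexp : ((1 : Matrix (Fin n) (Fin n) F) + c • V) * (1 + c • U)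
              = 1 + c • U + c • V + (c * c) • (V * U) := by
            simp only [mul_add, add_mul, one_mul, mul_one, smul_mul_assoc, mul_smul_comm,
              smul_add, smul_smul]
            abel
          rw [hexp, hZE]
          simp only [smul_add, smul_smul]
          rw [show c * (c * ϖ) = c * c * ϖ by ring]
          abel
    choose Vf hVfL hVfe using hpowB
    have hWL : (∑ i ∈ Finset.range p, Vf i) ∈ L :=
      Finset.sum_induction Vf (· ∈ L) (fun a b ha hb => hadd a ha b hb) h0 fun i _ => hVfL i
    obtain ⟨Z, hZ, hZE⟩ := hmul U hU _ hWL
    refine ⟨((p:F) * ϖ⁻¹) • U + c • Z, hadd _ (hsmul _ hpϖ _ hU) _ (hsmul _ hc _ hZ), ?_⟩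
    have hgeo : B ^ p = 1 + (B - 1) * ∑ i ∈ Finset.range p, B ^ i := by
      rw [mul_geom_sum]
      abel
    have hB1 : B - 1 = c • U := by rw [hB]; abel
    have hsumB : (∑ i ∈ Finset.range p, B ^ i)
        = (p : F) • (1 : Matrix (Fin n) (Fin n) F) + c • (∑ i ∈ Finset.range p, Vf i) := by
      rw [Finset.sum_congr rfl fun i _ => hVfe i, Finset.sum_add_distrib, Finset.sum_const,
        Finset.card_range, ← Finset.smul_sum, Nat.cast_smul_eq_nsmul]
    rw [hgeo, hB1, hsumB]
    rw [mul_add, mul_smul_comm, mul_one, smul_smul, smul_mul_assoc, mul_smul_comm, smul_smul,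
      hZE, smul_smul]
    rw [smul_add, smul_smul, smul_smul]
    congr 2
    · congr 1
      field_simp
    · ring_nf
  -- iterate the step
  have hm : ∀ A ∈ {A : Matrix (Fin n) (Fin n) F | A - 1 ∈ L}, ∀ m : ℕ,
      ∃ Z ∈ L, A ^ (p ^ m) = 1 + ϖ ^ m • Z := by
    intro A hA m
    induction m with
    | zero => exact ⟨A - 1, hA, by rw [pow_zero, pow_one, pow_zero, one_smul]; abel⟩
    | succ m ih =>
      obtain ⟨Z, hZ, hE⟩ := ih
      have hcm : ‖ϖ ^ m‖ ≤ 1 := by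
        rw [norm_pow]; exact pow_le_one₀ (norm_nonneg _) hϖle
      obtain ⟨U', hU', hE'⟩ := hstep (ϖ ^ m) hcm Z hZ
      refine ⟨U', hU', ?_⟩
      rw [pow_succ, pow_mul, hE, hE', ← pow_succ]
  -- statement 9
  have S9 : ∀ A ∈ {A : Matrix (Fin n) (Fin n) F | A - 1 ∈ L},
      Filter.Tendsto (fun m : ℕ => A ^ p ^ m) Filter.atTop (nhds 1) := by
    intro A hA
    choose Zf hZfL hZfe using hm A hA
    refine tendsto_iff_norm_sub_tendsto_zero.mpr ?_
    apply squeeze_zero (fun m => norm_nonneg _) (g := fun m => ‖ϖ‖ ^ m * C)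
    · intro m
      rw [hZfe m]
      have h : (1 : Matrix (Fin n) (Fin n) F) + ϖ ^ m • Zf m - 1 = ϖ ^ m • Zf m := by abel
      rw [h, norm_smul, norm_pow]
      exact mul_le_mul_of_nonneg_left (hC _ (hZfL m)) (by positivity)
    · have h := (tendsto_pow_atTop_nhds_zero_of_lt_one (norm_nonneg ϖ) hϖ1).mul_const C
      simpa using h
  exact ⟨S1, S2, S3, by show (1 : Matrix (Fin n) (Fin n) F) - 1 ∈ L; simpa using h0,
    S5, S6, S7, S8, S9⟩
end

section
/- Let E/F be cyclic of degree d with p ∤ d, and let γ ∈ GL_n(F) be topologically unipotent. If γ' ∈ GL_n(F) is the unique topologically unipotent d-th root of γ (which exists since γ ↦ γ^d is a homeomorphism on topologically unipotent elements), then N_{E/F}(γ') = γ'^d = γ when γ' is viewed in GL_n(E); in particular every topologically unipotent element of GL_n(F) is a norm from GL_n(E). -/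
open Filter

section Core

variable {R : Type*} [NormedRing R]

private lemma myaux_norm_le_one (hmax : ∀ a b : R, ‖a + b‖ ≤ max ‖a‖ ‖b‖)
    (h1 : ‖(1 : R)‖ ≤ 1) {x : R} (hx : ‖x - 1‖ ≤ 1) : ‖x‖ ≤ 1 := by
  have hx' : x = (x - 1) + 1 := by abel
  calc ‖x‖ = ‖(x - 1) + 1‖ := by rw [← hx']
    _ ≤ max ‖x - 1‖ ‖(1 : R)‖ := hmax _ _
    _ ≤ 1 := max_le hx h1

private lemma myaux_pow_le_one (h1 : ‖(1 : R)‖ ≤ 1) {x : R} (hx : ‖x‖ ≤ 1) :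
    ∀ i : ℕ, ‖x ^ i‖ ≤ 1 := by
  intro i
  induction i with
  | zero => simpa using h1
  | succ i ih =>
      calc ‖x ^ (i + 1)‖ = ‖x ^ i * x‖ := by rw [pow_succ]
        _ ≤ ‖x ^ i‖ * ‖x‖ := norm_mul_le _ _
        _ ≤ 1 * 1 := mul_le_mul ih hx (norm_nonneg _) zero_le_one
        _ = 1 := one_mul 1

private lemma myaux_geom (hmax : ∀ a b : R, ‖a + b‖ ≤ max ‖a‖ ‖b‖)
    (h1 : ‖(1 : R)‖ ≤ 1) {x : R} (hx : ‖x - 1‖ ≤ 1) :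
    ∀ t : ℕ, ‖x ^ t - 1‖ ≤ ‖x - 1‖ := by
  have hxle : ‖x‖ ≤ 1 := myaux_norm_le_one hmax h1 hx
  intro t
  induction t with
  | zero => simpa using norm_nonneg (x - 1)
  | succ t ih =>
      have hsplit : x ^ (t + 1) - 1 = x ^ t * (x - 1) + (x ^ t - 1) := by
        rw [pow_succ, mul_sub, mul_one]; abel
      calc ‖x ^ (t + 1) - 1‖ = ‖x ^ t * (x - 1) + (x ^ t - 1)‖ := by rw [hsplit]
        _ ≤ max ‖x ^ t * (x - 1)‖ ‖x ^ t - 1‖ := hmax _ _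
        _ ≤ ‖x - 1‖ := by
            refine max_le ?_ ih
            calc ‖x ^ t * (x - 1)‖ ≤ ‖x ^ t‖ * ‖x - 1‖ := norm_mul_le _ _
              _ ≤ 1 * ‖x - 1‖ := by
                  exact mul_le_mul_of_nonneg_right (myaux_pow_le_one h1 hxle t)
                    (norm_nonneg _)
              _ = ‖x - 1‖ := one_mul _

/-- Uniform smallness of `g ^ (p^m * t) - 1` for topologically unipotent `g`. -/
private lemma myaux_L1 (hmax : ∀ a b : R, ‖a + b‖ ≤ max ‖a‖ ‖b‖)
    (h1 : ‖(1 : R)‖ ≤ 1) {p : ℕ} {g : R}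
    (hg : Tendsto (fun m : ℕ => g ^ p ^ m) atTop (nhds 1)) {ε : ℝ} (hε : 0 < ε) :
    ∃ m0 : ℕ, ∀ m ≥ m0, ∀ t : ℕ, ‖g ^ (p ^ m * t) - 1‖ < ε := by
  have h2 : Tendsto (fun m : ℕ => ‖g ^ p ^ m - 1‖) atTop (nhds 0) :=
    tendsto_iff_norm_sub_tendsto_zero.mp hg
  have hε' : 0 < min ε 1 := lt_min hε one_pos
  obtain ⟨m0, hm0⟩ := (Metric.tendsto_atTop.mp h2) (min ε 1) hε'
  refine ⟨m0, fun m hm t => ?_⟩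
  have hsm : ‖g ^ p ^ m - 1‖ < min ε 1 := by
    have := hm0 m hm
    rwa [Real.dist_eq, sub_zero, abs_of_nonneg (norm_nonneg _)] at this
  have hle : ‖g ^ p ^ m - 1‖ ≤ 1 := le_of_lt (lt_of_lt_of_le hsm (min_le_right _ _))
  calc ‖g ^ (p ^ m * t) - 1‖ = ‖(g ^ p ^ m) ^ t - 1‖ := by rw [pow_mul]
    _ ≤ ‖g ^ p ^ m - 1‖ := myaux_geom hmax h1 hle t
    _ < min ε 1 := hsm
    _ ≤ ε := min_le_left _ _

/-- Powers of a topologically unipotent element are bounded. -/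
private lemma myaux_L2 (hmax : ∀ a b : R, ‖a + b‖ ≤ max ‖a‖ ‖b‖)
    (h1 : ‖(1 : R)‖ ≤ 1) {p : ℕ} (hp : 0 < p) {g : R}
    (hg : Tendsto (fun m : ℕ => g ^ p ^ m) atTop (nhds 1)) :
    ∃ C : ℝ, 1 ≤ C ∧ ∀ k : ℕ, ‖g ^ k‖ ≤ C := by
  obtain ⟨m0, hm0⟩ := myaux_L1 hmax h1 hg one_pos
  set q := p ^ m0 with hq
  have hq0 : 0 < q := pow_pos hp m0
  refine ⟨(∑ r ∈ Finset.range q, ‖g ^ r‖) + 1, ?_, fun k => ?_⟩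
  · have : (0 : ℝ) ≤ ∑ r ∈ Finset.range q, ‖g ^ r‖ :=
      Finset.sum_nonneg fun i _ => norm_nonneg _
    linarith
  · have hmem : k % q ∈ Finset.range q := Finset.mem_range.mpr (Nat.mod_lt k hq0)
    have hone : ‖g ^ (q * (k / q))‖ ≤ 1 := by
      have h' : ‖g ^ (q * (k / q)) - 1‖ < 1 := hm0 m0 le_rfl (k / q)
      exact myaux_norm_le_one hmax h1 (le_of_lt h')
    calc ‖g ^ k‖ = ‖g ^ (q * (k / q)) * g ^ (k % q)‖ := by
          rw [← pow_add, Nat.div_add_mod]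
      _ ≤ ‖g ^ (q * (k / q))‖ * ‖g ^ (k % q)‖ := norm_mul_le _ _
      _ ≤ 1 * ‖g ^ (k % q)‖ :=
          mul_le_mul_of_nonneg_right hone (norm_nonneg _)
      _ = ‖g ^ (k % q)‖ := one_mul _
      _ ≤ ∑ r ∈ Finset.range q, ‖g ^ r‖ :=
          Finset.single_le_sum (fun i _ => norm_nonneg _) hmem
      _ ≤ (∑ r ∈ Finset.range q, ‖g ^ r‖) + 1 := by linarith

private lemma myaux_sum {ι : Type*} (hmax : ∀ a b : R, ‖a + b‖ ≤ max ‖a‖ ‖b‖)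
    (s : Finset ι) (f : ι → R) {B : ℝ} (hB : 0 ≤ B)
    (h : ∀ i ∈ s, ‖f i‖ ≤ B) : ‖∑ i ∈ s, f i‖ ≤ B := by
  classical
  induction s using Finset.induction_on with
  | empty => simpa using hB
  | insert _ _ hmem ih =>
      rename_i a s
      rw [Finset.sum_insert hmem]
      refine le_trans (hmax _ _) (max_le (h _ (Finset.mem_insert_self a s)) ?_)
      exact ih fun i hi => h i (Finset.mem_insert_of_mem hi)

/-- Bound on difference of powers of commuting elements with bounded powers. -/
private lemma myaux_L3 (hmax : ∀ a b : R, ‖a + b‖ ≤ max ‖a‖ ‖b‖)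
    {x y : R} {C : ℝ} (hxy : Commute x y)
    (hx : ∀ i : ℕ, ‖x ^ i‖ ≤ C) (hy : ∀ i : ℕ, ‖y ^ i‖ ≤ C) (N : ℕ) :
    ‖x ^ N - y ^ N‖ ≤ C * C * ‖x - y‖ := by
  have hC : 0 ≤ C := le_trans (norm_nonneg _) (hx 0)
  rw [← hxy.geom_sum₂_mul N]
  calc ‖(∑ i ∈ Finset.range N, x ^ i * y ^ (N - 1 - i)) * (x - y)‖
      ≤ ‖∑ i ∈ Finset.range N, x ^ i * y ^ (N - 1 - i)‖ * ‖x - y‖ := norm_mul_le _ _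
    _ ≤ C * C * ‖x - y‖ := by
        refine mul_le_mul_of_nonneg_right ?_ (norm_nonneg _)
        refine myaux_sum hmax _ _ (mul_nonneg hC hC) fun i _ => ?_
        calc ‖x ^ i * y ^ (N - 1 - i)‖ ≤ ‖x ^ i‖ * ‖y ^ (N - 1 - i)‖ := norm_mul_le _ _
          _ ≤ C * C := mul_le_mul (hx i) (hy _) (norm_nonneg _) hC

/-- If `x` is topologically unipotent and `x ^ d = g`, then `g ^ (a m) → x`. -/
private lemma myaux_root (hmax : ∀ a b : R, ‖a + b‖ ≤ max ‖a‖ ‖b‖)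
    (h1 : ‖(1 : R)‖ ≤ 1) {p d : ℕ} (hp : 0 < p) {a c : ℕ → ℕ}
    (hac : ∀ m : ℕ, d * a m = 1 + p ^ (m + 1) * c m)
    {x g : R} (hx : Tendsto (fun m : ℕ => x ^ p ^ m) atTop (nhds 1))
    (hxd : x ^ d = g) :
    Tendsto (fun m : ℕ => g ^ a m) atTop (nhds x) := by
  obtain ⟨C, hC1, hC⟩ := myaux_L2 hmax h1 hp hx
  rw [tendsto_iff_norm_sub_tendsto_zero]
  have key : ∀ m : ℕ, ‖g ^ a m - x‖ ≤ C * ‖x ^ (p ^ (m + 1) * c m) - 1‖ := by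
    intro m
    have hgm : g ^ a m = x * x ^ (p ^ (m + 1) * c m) := by
      rw [← hxd, ← pow_mul, hac m, pow_add, pow_one]
    rw [hgm]
    calc ‖x * x ^ (p ^ (m + 1) * c m) - x‖
        = ‖x * (x ^ (p ^ (m + 1) * c m) - 1)‖ := by rw [mul_sub, mul_one]
      _ ≤ ‖x‖ * ‖x ^ (p ^ (m + 1) * c m) - 1‖ := norm_mul_le _ _
      _ ≤ C * ‖x ^ (p ^ (m + 1) * c m) - 1‖ := by
          refine mul_le_mul_of_nonneg_right ?_ (norm_nonneg _)
          simpa using hC 1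
  have h2 : Tendsto (fun m : ℕ => ‖x ^ (p ^ (m + 1) * c m) - 1‖) atTop (nhds 0) := by
    rw [Metric.tendsto_atTop]
    intro ε hε
    obtain ⟨m0, hm0⟩ := myaux_L1 hmax h1 hx hε
    refine ⟨m0, fun m hm => ?_⟩
    rw [Real.dist_eq, sub_zero, abs_of_nonneg (norm_nonneg _)]
    exact hm0 (m + 1) (le_trans hm (Nat.le_succ m)) (c m)
  have h3 : Tendsto (fun m : ℕ => C * ‖x ^ (p ^ (m + 1) * c m) - 1‖) atTop (nhds 0) := by
    simpa using h2.const_mul C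
  exact squeeze_zero (fun m => norm_nonneg _) key h3

/-- Existence of the topologically unipotent `d`-th root at the level of the ring. -/
private lemma myaux_exists (hmax : ∀ a b : R, ‖a + b‖ ≤ max ‖a‖ ‖b‖)
    (h1 : ‖(1 : R)‖ ≤ 1) [CompleteSpace R] {p d : ℕ} (hp : 0 < p) {a c : ℕ → ℕ}
    (hac : ∀ m : ℕ, d * a m = 1 + p ^ (m + 1) * c m)
    (hmod : ∀ N k : ℕ, N ≤ k → a N ≡ a k [MOD p ^ (N + 1)])
    {g : R} (hg : Tendsto (fun m : ℕ => g ^ p ^ m) atTop (nhds 1)) :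
    ∃ g' : R, Tendsto (fun m : ℕ => g ^ a m) atTop (nhds g') ∧ g' ^ d = g ∧
      Tendsto (fun m : ℕ => g' ^ p ^ m) atTop (nhds 1) := by
  obtain ⟨C, hC1, hC⟩ := myaux_L2 hmax h1 hp hg
  have hC0 : 0 < C := lt_of_lt_of_le one_pos hC1
  -- difference decomposition
  have hdiff : ∀ N m k : ℕ, N ≤ m → N ≤ k → a m ≤ a k →
      ∃ t : ℕ, g ^ a k - g ^ a m = g ^ a m * (g ^ (p ^ (N + 1) * t) - 1) := by
    intro N m k hNm hNk hamk
    have hmk : a m ≡ a k [MOD p ^ (N + 1)] := (hmod N m hNm).symm.trans (hmod N k hNk)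
    have hdvd : p ^ (N + 1) ∣ a k - a m := (Nat.modEq_iff_dvd' hamk).mp hmk
    obtain ⟨t, ht⟩ := hdvd
    refine ⟨t, ?_⟩
    have hak : a k = a m + p ^ (N + 1) * t := by omega
    rw [hak, pow_add, mul_sub, mul_one]
  -- Cauchy
  have hcauchy : CauchySeq (fun m : ℕ => g ^ a m) := by
    rw [Metric.cauchySeq_iff']
    intro ε hε
    obtain ⟨m0, hm0⟩ := myaux_L1 hmax h1 hg (div_pos hε hC0)
    refine ⟨m0, fun m hm => ?_⟩
    rcases le_total (a m0) (a m) with hle | hle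
    · obtain ⟨t, ht⟩ := hdiff m0 m0 m le_rfl hm hle
      rw [dist_eq_norm, ht]
      calc ‖g ^ a m0 * (g ^ (p ^ (m0 + 1) * t) - 1)‖
          ≤ ‖g ^ a m0‖ * ‖g ^ (p ^ (m0 + 1) * t) - 1‖ := norm_mul_le _ _
        _ ≤ C * ‖g ^ (p ^ (m0 + 1) * t) - 1‖ :=
            mul_le_mul_of_nonneg_right (hC _) (norm_nonneg _)
        _ < C * (ε / C) := by
            exact mul_lt_mul_of_pos_left (hm0 (m0 + 1) (Nat.le_succ m0) t) hC0
        _ = ε := mul_div_cancel₀ ε (ne_of_gt hC0)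
    · obtain ⟨t, ht⟩ := hdiff m0 m m0 hm le_rfl hle
      rw [dist_eq_norm, norm_sub_rev, ht]
      calc ‖g ^ a m * (g ^ (p ^ (m0 + 1) * t) - 1)‖
          ≤ ‖g ^ a m‖ * ‖g ^ (p ^ (m0 + 1) * t) - 1‖ := norm_mul_le _ _
        _ ≤ C * ‖g ^ (p ^ (m0 + 1) * t) - 1‖ :=
            mul_le_mul_of_nonneg_right (hC _) (norm_nonneg _)
        _ < C * (ε / C) := by
            exact mul_lt_mul_of_pos_left (hm0 (m0 + 1) (Nat.le_succ m0) t) hC0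
        _ = ε := mul_div_cancel₀ ε (ne_of_gt hC0)
  obtain ⟨g', hg'⟩ := cauchySeq_tendsto_of_complete hcauchy
  -- g' commutes with powers of g
  have hcomm : ∀ j : ℕ, Commute g' (g ^ j) := by
    intro j
    have h1' : Tendsto (fun m : ℕ => g ^ a m * g ^ j) atTop (nhds (g' * g ^ j)) :=
      hg'.mul_const _
    have h2' : Tendsto (fun m : ℕ => g ^ a m * g ^ j) atTop (nhds (g ^ j * g')) := by
      have heq : (fun m : ℕ => g ^ a m * g ^ j) = fun m : ℕ => g ^ j * g ^ a m :=
        funext fun m => pow_mul_comm g (a m) j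
      rw [heq]
      exact hg'.const_mul _
    exact tendsto_nhds_unique h1' h2'
  -- powers of g' are bounded by C
  have hC' : ∀ i : ℕ, ‖g' ^ i‖ ≤ C := by
    intro i
    have h1' : Tendsto (fun m : ℕ => ‖(g ^ a m) ^ i‖) atTop (nhds ‖g' ^ i‖) :=
      ((hg'.pow i).norm)
    refine le_of_tendsto h1' (Eventually.of_forall fun m => ?_)
    rw [← pow_mul]
    exact hC _
  -- g' ^ d = g
  have hgd : g' ^ d = g := by
    have hA : Tendsto (fun m : ℕ => (g ^ a m) ^ d) atTop (nhds (g' ^ d)) := hg'.pow d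
    have hB : Tendsto (fun m : ℕ => (g ^ d) ^ a m) atTop (nhds g) :=
      myaux_root hmax h1 hp hac hg rfl
    have heq : (fun m : ℕ => (g ^ d) ^ a m) = fun m : ℕ => (g ^ a m) ^ d := by
      funext m
      rw [← pow_mul, ← pow_mul, mul_comm]
    rw [heq] at hB
    exact tendsto_nhds_unique hA hB
  refine ⟨g', hg', hgd, ?_⟩
  -- g' is topologically unipotent
  rw [tendsto_iff_norm_sub_tendsto_zero]
  have key : ∀ m : ℕ, ‖g' ^ p ^ m - 1‖ ≤
      max (C * C * ‖g' - g ^ a m‖) ‖g ^ (p ^ m * a m) - 1‖ := by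
    intro m
    have hsplit : g' ^ p ^ m - 1 =
        (g' ^ p ^ m - (g ^ a m) ^ p ^ m) + ((g ^ a m) ^ p ^ m - 1) := by abel
    have hyb : ∀ i : ℕ, ‖(g ^ a m) ^ i‖ ≤ C := by
      intro i; rw [← pow_mul]; exact hC _
    calc ‖g' ^ p ^ m - 1‖
        = ‖(g' ^ p ^ m - (g ^ a m) ^ p ^ m) + ((g ^ a m) ^ p ^ m - 1)‖ := by rw [← hsplit]
      _ ≤ max ‖g' ^ p ^ m - (g ^ a m) ^ p ^ m‖ ‖(g ^ a m) ^ p ^ m - 1‖ := hmax _ _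
      _ ≤ max (C * C * ‖g' - g ^ a m‖) ‖g ^ (p ^ m * a m) - 1‖ := by
          refine max_le_max ?_ ?_
          · exact myaux_L3 hmax (hcomm (a m)) hC' hyb (p ^ m)
          · rw [← pow_mul, mul_comm (a m) (p ^ m)]
  have hA : Tendsto (fun m : ℕ => C * C * ‖g' - g ^ a m‖) atTop (nhds 0) := by
    have h0 : Tendsto (fun m : ℕ => ‖g ^ a m - g'‖) atTop (nhds 0) :=
      tendsto_iff_norm_sub_tendsto_zero.mp hg'
    have h0' : Tendsto (fun m : ℕ => ‖g' - g ^ a m‖) atTop (nhds 0) := by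
      simpa [norm_sub_rev] using h0
    simpa using h0'.const_mul (C * C)
  have hB : Tendsto (fun m : ℕ => ‖g ^ (p ^ m * a m) - 1‖) atTop (nhds 0) := by
    rw [Metric.tendsto_atTop]
    intro ε hε
    obtain ⟨m0, hm0⟩ := myaux_L1 hmax h1 hg hε
    refine ⟨m0, fun m hm => ?_⟩
    rw [Real.dist_eq, sub_zero, abs_of_nonneg (norm_nonneg _)]
    exact hm0 m hm (a m)
  have hmaxT : Tendsto (fun m : ℕ =>
      max (C * C * ‖g' - g ^ a m‖) ‖g ^ (p ^ m * a m) - 1‖) atTop (nhds 0) := by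
    have := hA.max hB
    simpa using this
  exact squeeze_zero (fun m => norm_nonneg _) key hmaxT

end Core

private lemma myaux_list {G : Type*} [Monoid G] (x : G) (k : ℕ) :
    ((List.range k).map fun _ => x).prod = x ^ k := by
  induction k with
  | zero => simp
  | succ k ih =>
      rw [List.range_succ, List.map_append, List.prod_append]
      simp [ih, pow_succ]

/-- Let `E/F` be cyclic of degree `d`, `p` odd and prime to `d`, with generator
`θ`, and let `γ ∈ GL_n(F)` be topologically unipotent. Then `γ` has a unique topologically
unipotent `d`-th root `γ' ∈ GL_n(F)`, and the abstract norm
`N(γ') = γ'·θ(γ')⋯θ^{d-1}(γ')` (computed in `GL_n(E)`) equals `γ'^d = γ`; in particular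
every topologically unipotent element of `GL_n(F)` is a norm from `GL_n(E)`. -/
theorem stmt15 {p : ℕ} [Fact p.Prime] (hp2 : p ≠ 2)
    (F E : Type*) [NontriviallyNormedField F] [NontriviallyNormedField E]
    [NormedAlgebra ℚ_[p] F] [FiniteDimensional ℚ_[p] F]
    [Algebra F E] [FiniteDimensional F E] [IsGalois F E]
    (θ : E ≃ₐ[F] E) (hθgen : ∀ σ : E ≃ₐ[F] E, σ ∈ Subgroup.zpowers θ)
    (d : ℕ) (hd : d = Module.finrank F E) (hpd : ¬ p ∣ d) (n : ℕ)
    (ι : (Matrix (Fin n) (Fin n) F)ˣ →* (Matrix (Fin n) (Fin n) E)ˣ)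
    (hι : ι = Units.map (RingHom.mapMatrix (m := Fin n) (algebraMap F E)).toMonoidHom)
    (θG : (Matrix (Fin n) (Fin n) E)ˣ →* (Matrix (Fin n) (Fin n) E)ˣ)
    (hθG : θG = Units.map
      ((AlgEquiv.mapMatrix (m := Fin n) θ).toAlgHom.toRingHom.toMonoidHom))
    (γ : (Matrix (Fin n) (Fin n) F)ˣ)
    (hγ : Filter.Tendsto (fun m : ℕ => γ ^ p ^ m) Filter.atTop (nhds 1)) :
    (∃ γ' : (Matrix (Fin n) (Fin n) F)ˣ,
      (Filter.Tendsto (fun m : ℕ => γ' ^ p ^ m) Filter.atTop (nhds 1) ∧ γ' ^ d = γ) ∧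
      (∀ γ'' : (Matrix (Fin n) (Fin n) F)ˣ,
        Filter.Tendsto (fun m : ℕ => γ'' ^ p ^ m) Filter.atTop (nhds 1) → γ'' ^ d = γ →
        γ'' = γ') ∧
      ((List.range d).map fun i => (⇑θG)^[i] (ι γ')).prod = ι γ) ∧
    ∃ δ : (Matrix (Fin n) (Fin n) E)ˣ,
      ((List.range d).map fun i => (⇑θG)^[i] δ).prod = ι γ := by
  classical
  have hprime : p.Prime := Fact.out
  have hp0 : 0 < p := hprime.pos
  have hd1 : 0 < d := by rw [hd]; exact Module.finrank_pos
  have hcop : ∀ m : ℕ, Nat.Coprime d (p ^ m) := fun m =>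
    Nat.Coprime.pow_right m ((Nat.Prime.coprime_iff_not_dvd hprime).mpr hpd).symm
  -- construction of the approximate inverses of `d` modulo `p ^ (m+1)`
  have hinv : ∀ m : ℕ, ∃ b : ℕ, d * b ≡ 1 [MOD p ^ (m + 1)] := by
    intro m
    haveI : NeZero (p ^ (m + 1)) := ⟨pow_ne_zero _ hprime.ne_zero⟩
    have hu : IsUnit ((d : ZMod (p ^ (m + 1)))) :=
      (ZMod.isUnit_iff_coprime d (p ^ (m + 1))).mpr (hcop (m + 1))
    refine ⟨((d : ZMod (p ^ (m + 1)))⁻¹).val, ?_⟩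
    have h2 : ((d * ((d : ZMod (p ^ (m + 1)))⁻¹).val : ℕ) : ZMod (p ^ (m + 1)))
        = ((1 : ℕ) : ZMod (p ^ (m + 1))) := by
      rw [Nat.cast_mul, ZMod.natCast_rightInverse _, ZMod.mul_inv_of_unit _ hu, Nat.cast_one]
    exact (ZMod.natCast_eq_natCast_iff _ _ _).mp h2
  choose a ha using hinv
  have hcex : ∀ m : ℕ, ∃ cm : ℕ, d * a m = 1 + p ^ (m + 1) * cm := by
    intro m
    have hq1 : 1 < p ^ (m + 1) := Nat.one_lt_pow (Nat.succ_ne_zero m) hprime.one_lt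
    have h1le : 1 ≤ d * a m := by
      by_contra hcon
      have h0 : d * a m = 0 := by omega
      have hm := ha m
      rw [Nat.ModEq, h0, Nat.zero_mod, Nat.mod_eq_of_lt hq1] at hm
      exact one_ne_zero hm.symm
    obtain ⟨cm, hcm⟩ := (Nat.modEq_iff_dvd' h1le).mp (ha m).symm
    exact ⟨cm, by omega⟩
  choose c hac using hcex
  have hmod : ∀ N k : ℕ, N ≤ k → a N ≡ a k [MOD p ^ (N + 1)] := by
    intro N k hNk
    have hk' : d * a k ≡ 1 [MOD p ^ (N + 1)] :=
      Nat.ModEq.of_dvd (pow_dvd_pow p (Nat.succ_le_succ hNk)) (ha k)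
    exact Nat.ModEq.cancel_left_of_coprime ((hcop (N + 1)).symm) ((ha N).trans hk'.symm)
  -- normed ring structure on matrices
  haveI hUF : IsUltrametricDist F := IsUltrametricDist.of_normedAlgebra ℚ_[p]
  haveI hCF : CompleteSpace F := FiniteDimensional.complete ℚ_[p] F
  letI instG : NormedAddCommGroup (Matrix (Fin n) (Fin n) F) := Matrix.normedAddCommGroup
  have hmax : ∀ A B : Matrix (Fin n) (Fin n) F, ‖A + B‖ ≤ max ‖A‖ ‖B‖ := by
    intro A B
    rw [Matrix.norm_le_iff (le_max_of_le_left (norm_nonneg A))]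
    intro i j
    calc ‖(A + B) i j‖ = ‖A i j + B i j‖ := by rw [Matrix.add_apply]
      _ ≤ max ‖A i j‖ ‖B i j‖ := IsUltrametricDist.norm_add_le_max _ _
      _ ≤ max ‖A‖ ‖B‖ := max_le_max (Matrix.norm_entry_le_entrywise_sup_norm A)
          (Matrix.norm_entry_le_entrywise_sup_norm B)
  have hmul : ∀ A B : Matrix (Fin n) (Fin n) F, ‖A * B‖ ≤ ‖A‖ * ‖B‖ := by
    intro A B
    rw [Matrix.norm_le_iff (mul_nonneg (norm_nonneg A) (norm_nonneg B))]
    intro i j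
    rw [Matrix.mul_apply]
    refine IsUltrametricDist.norm_sum_le_of_forall_le_of_nonneg
      (mul_nonneg (norm_nonneg A) (norm_nonneg B)) fun k _ => ?_
    rw [norm_mul]
    exact mul_le_mul (Matrix.norm_entry_le_entrywise_sup_norm A)
      (Matrix.norm_entry_le_entrywise_sup_norm B) (norm_nonneg _) (norm_nonneg _)
  have h1 : ‖(1 : Matrix (Fin n) (Fin n) F)‖ ≤ 1 := by
    rw [Matrix.norm_le_iff zero_le_one]
    intro i j
    rw [Matrix.one_apply]
    split <;> simp
  letI instR : NormedRing (Matrix (Fin n) (Fin n) F) :=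
    { instG, (inferInstance : Ring (Matrix (Fin n) (Fin n) F)) with norm_mul_le := hmul }
  letI : @CompleteSpace (Matrix (Fin n) (Fin n) F)
      (@PseudoMetricSpace.toUniformSpace _ instR.toPseudoMetricSpace) :=
    inferInstanceAs (CompleteSpace (Fin n → Fin n → F))
  -- topologically unipotent data at the level of the matrix ring
  have hgval : Tendsto (fun m : ℕ => (γ : Matrix (Fin n) (Fin n) F) ^ p ^ m) atTop (nhds 1) := by
    have := (Units.continuous_val.tendsto (1 : (Matrix (Fin n) (Fin n) F)ˣ)).comp hγ
    simpa [Function.comp_def] using this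
  have hhval : Tendsto (fun m : ℕ => ((γ⁻¹ : (Matrix (Fin n) (Fin n) F)ˣ) :
      Matrix (Fin n) (Fin n) F) ^ p ^ m) atTop (nhds 1) := by
    have := (Units.continuous_coe_inv.tendsto (1 : (Matrix (Fin n) (Fin n) F)ˣ)).comp hγ
    simpa [Function.comp_def, ← inv_pow] using this
  obtain ⟨g', hg't, hg'd, hg'u⟩ := myaux_exists hmax h1 hp0 hac hmod hgval
  obtain ⟨h', hh't, hh'd, hh'u⟩ := myaux_exists hmax h1 hp0 hac hmod hhval
  have hgh : (γ : Matrix (Fin n) (Fin n) F) * ((γ⁻¹ : (Matrix (Fin n) (Fin n) F)ˣ) :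
      Matrix (Fin n) (Fin n) F) = 1 := γ.mul_inv
  have hhg : ((γ⁻¹ : (Matrix (Fin n) (Fin n) F)ˣ) : Matrix (Fin n) (Fin n) F) *
      (γ : Matrix (Fin n) (Fin n) F) = 1 := γ.inv_mul
  have hcommgh : Commute (γ : Matrix (Fin n) (Fin n) F)
      ((γ⁻¹ : (Matrix (Fin n) (Fin n) F)ˣ) : Matrix (Fin n) (Fin n) F) := by
    show _ = _
    rw [hgh, hhg]
  have hmul1 : g' * h' = 1 := by
    have hA : Tendsto (fun m : ℕ => (γ : Matrix (Fin n) (Fin n) F) ^ a m *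
        ((γ⁻¹ : (Matrix (Fin n) (Fin n) F)ˣ) : Matrix (Fin n) (Fin n) F) ^ a m) atTop
        (nhds (g' * h')) := hg't.mul hh't
    have heq : (fun m : ℕ => (γ : Matrix (Fin n) (Fin n) F) ^ a m *
        ((γ⁻¹ : (Matrix (Fin n) (Fin n) F)ˣ) : Matrix (Fin n) (Fin n) F) ^ a m) =
        fun _ : ℕ => (1 : Matrix (Fin n) (Fin n) F) := by
      funext m; rw [← hcommgh.mul_pow, hgh, one_pow]
    rw [heq] at hA
    exact (tendsto_nhds_unique tendsto_const_nhds hA).symm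
  have hmul2 : h' * g' = 1 := by
    have hA : Tendsto (fun m : ℕ => ((γ⁻¹ : (Matrix (Fin n) (Fin n) F)ˣ) :
        Matrix (Fin n) (Fin n) F) ^ a m * (γ : Matrix (Fin n) (Fin n) F) ^ a m) atTop
        (nhds (h' * g')) := hh't.mul hg't
    have heq : (fun m : ℕ => ((γ⁻¹ : (Matrix (Fin n) (Fin n) F)ˣ) :
        Matrix (Fin n) (Fin n) F) ^ a m * (γ : Matrix (Fin n) (Fin n) F) ^ a m) =
        fun _ : ℕ => (1 : Matrix (Fin n) (Fin n) F) := by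
      funext m; rw [← hcommgh.symm.mul_pow, hhg, one_pow]
    rw [heq] at hA
    exact (tendsto_nhds_unique tendsto_const_nhds hA).symm
  refine ⟨⟨⟨g', h', hmul1, hmul2⟩, ⟨?_, ?_⟩, ?_, ?_⟩, ?_⟩
  · -- topological unipotence at the level of units
    rw [Units.isEmbedding_embedProduct.tendsto_nhds_iff]
    have hval : (Units.embedProduct _ ∘ fun m : ℕ =>
        (⟨g', h', hmul1, hmul2⟩ : (Matrix (Fin n) (Fin n) F)ˣ) ^ p ^ m) =
        fun m : ℕ => ((g' ^ p ^ m : Matrix (Fin n) (Fin n) F),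
          MulOpposite.op (h' ^ p ^ m)) := by
      funext m
      simp only [Function.comp_apply, Units.embedProduct_apply, ← inv_pow,
        Units.val_pow_eq_pow_val]
      rfl
    rw [hval, map_one]
    have h1eq : (1 : Matrix (Fin n) (Fin n) F × (Matrix (Fin n) (Fin n) F)ᵐᵒᵖ) =
        ((1 : Matrix (Fin n) (Fin n) F), MulOpposite.op (1 : Matrix (Fin n) (Fin n) F)) := rfl
    rw [h1eq]
    exact Tendsto.prodMk_nhds hg'u ((MulOpposite.continuous_op.tendsto 1).comp hh'u)
  · -- (γ')^d = γ
    exact Units.ext (by simpa [Units.val_pow_eq_pow_val] using hg'd)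
  · -- uniqueness
    intro γ'' htu hpow
    have hxval : Tendsto (fun m : ℕ => ((γ'' : Matrix (Fin n) (Fin n) F)) ^ p ^ m) atTop
        (nhds 1) := by
      have := (Units.continuous_val.tendsto (1 : (Matrix (Fin n) (Fin n) F)ˣ)).comp htu
      simpa [Function.comp_def] using this
    have hxd : ((γ'' : Matrix (Fin n) (Fin n) F)) ^ d = (γ : Matrix (Fin n) (Fin n) F) := by
      have := congrArg (Units.val) hpow
      simpa [Units.val_pow_eq_pow_val] using this
    have hroot : Tendsto (fun m : ℕ => (γ : Matrix (Fin n) (Fin n) F) ^ a m) atTop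
        (nhds (γ'' : Matrix (Fin n) (Fin n) F)) := myaux_root hmax h1 hp0 hac hxval hxd
    exact Units.ext (tendsto_nhds_unique hroot hg't)
  · -- the abstract norm equals ι γ
    have hfix : θG (ι ⟨g', h', hmul1, hmul2⟩) = ι ⟨g', h', hmul1, hmul2⟩ := by
      subst hι hθG
      refine Units.ext ?_
      simp only [Units.coe_map, RingHom.toMonoidHom_eq_coe, MonoidHom.coe_coe]
      ext i j
      simp [RingHom.mapMatrix_apply, AlgEquiv.mapMatrix_apply, Matrix.map_apply]
    have hiter : ∀ i : ℕ, (⇑θG)^[i] (ι ⟨g', h', hmul1, hmul2⟩) = ι ⟨g', h', hmul1, hmul2⟩ :=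
      fun i => Function.iterate_fixed hfix i
    have hmapeq : ((List.range d).map fun i => (⇑θG)^[i] (ι ⟨g', h', hmul1, hmul2⟩)) =
        (List.range d).map fun _ => ι ⟨g', h', hmul1, hmul2⟩ :=
      List.map_congr_left fun i _ => hiter i
    rw [hmapeq, myaux_list]
    rw [← map_pow]
    congr 1
    exact Units.ext (by simpa [Units.val_pow_eq_pow_val] using hg'd)
  · -- existence of a norm
    refine ⟨ι ⟨g', h', hmul1, hmul2⟩, ?_⟩
    have hfix : θG (ι ⟨g', h', hmul1, hmul2⟩) = ι ⟨g', h', hmul1, hmul2⟩ := by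
      subst hι hθG
      refine Units.ext ?_
      simp only [Units.coe_map, RingHom.toMonoidHom_eq_coe, MonoidHom.coe_coe]
      ext i j
      simp [RingHom.mapMatrix_apply, AlgEquiv.mapMatrix_apply, Matrix.map_apply]
    have hiter : ∀ i : ℕ, (⇑θG)^[i] (ι ⟨g', h', hmul1, hmul2⟩) = ι ⟨g', h', hmul1, hmul2⟩ :=
      fun i => Function.iterate_fixed hfix i
    have hmapeq : ((List.range d).map fun i => (⇑θG)^[i] (ι ⟨g', h', hmul1, hmul2⟩)) =
        (List.range d).map fun _ => ι ⟨g', h', hmul1, hmul2⟩ :=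
      List.map_congr_left fun i _ => hiter i
    rw [hmapeq, myaux_list]
    rw [← map_pow]
    congr 1
    exact Units.ext (by simpa [Units.val_pow_eq_pow_val] using hg'd)
end
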